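/- Let K be a field of characteristic ≠ 2, and L = K(√α₁, …, √α_r) where α₁, …, α_r ∈ K^×. Then for any x ∈ K such that x is a square in L, one has x = α₁^{e₁} ⋯ α_r^{e_r} · q² for some integers e₁,…,e_r ∈ {0,1} and some q ∈ K. -/

import Mathlib

theorem aux13 (r : ℕ) : ∀ (K L : Type*) [Field K] [Field L] [Algebra K L],
    (2 : K) ≠ 0 → ∀ (α : Fin r → K), (∀ i, α i ≠ 0) → ∀ (β : Fin r → L),
    (∀ i, β i ^ 2 = algebraMap K L (α i)) →
    IntermediateField.adjoin K (Set.range β) = ⊤ →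
    ∀ x : K, IsSquare (algebraMap K L x) →
    ∃ (e : Fin r → ℕ) (q : K), (∀ i, e i ≤ 1) ∧ x = (∏ i, α i ^ e i) * q ^ 2 := by
  induction r with
  | zero =>
    intro K L _ _ _ h2 α hα β hβ hgen x hx
    obtain ⟨y, hy⟩ := hx
    have hyb : y ∈ (⊥ : IntermediateField K L) := by
      rw [← IntermediateField.adjoin_empty K L, ← Set.range_eq_empty β, hgen]
      trivial
    obtain ⟨q, hq⟩ := IntermediateField.mem_bot.mp hyb
    refine ⟨fun _ => 0, q, fun i => by simp, ?_⟩
    have : algebraMap K L x = algebraMap K L (q ^ 2) := by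
      rw [hy, ← hq, map_pow]; ring
    have hxq : x = q ^ 2 := (algebraMap K L).injective this
    simp [hxq]
  | succ r IH =>
    intro K L _ _ _ h2 α hα β hβ hgen x hx
    set γ := β (Fin.last r) with hγdef
    set L' := IntermediateField.adjoin K (Set.range (fun i : Fin r => β i.castSucc)) with hL'
    have hmemL' : ∀ i : Fin r, β i.castSucc ∈ L' := fun i =>
      IntermediateField.subset_adjoin _ _ ⟨i, rfl⟩
    have hc : algebraMap K L (α (Fin.last r)) ∈ L' := IntermediateField.algebraMap_mem _ _
    -- β' : generators inside L'
    set β' : Fin r → L' := fun i => ⟨β i.castSucc, hmemL' i⟩ with hβ'def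
    have hβ' : ∀ i, β' i ^ 2 = algebraMap K ↥L' (α i.castSucc) := by
      intro i
      apply Subtype.ext
      push_cast [IntermediateField.coe_algebraMap_apply]
      exact hβ _
    have hgen' : IntermediateField.adjoin K (Set.range β') = ⊤ := by
      rw [eq_top_iff]
      rintro ⟨z, hz⟩ -
      induction hz using IntermediateField.adjoin_induction with
      | mem w hw =>
        obtain ⟨i, rfl⟩ := hw
        exact IntermediateField.subset_adjoin _ _ ⟨i, rfl⟩
      | algebraMap c => exact IntermediateField.algebraMap_mem _ c
      | add u v hu hv ihu ihv => exact add_mem ihu ihv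
      | inv u hu ihu => exact inv_mem ihu
      | mul u v hu hv ihu ihv => exact mul_mem ihu ihv
    by_cases hγL : γ ∈ L'
    · -- β last already in L', so L' = ⊤
      have hβmem : ∀ i, β i ∈ L' := fun i => Fin.lastCases hγL hmemL' i
      have hL'top : L' = ⊤ := by
        rw [← top_le_iff, ← hgen, IntermediateField.adjoin_le_iff]
        rintro z ⟨i, rfl⟩; exact hβmem i
      obtain ⟨y, hy⟩ := hx
      have hyL : y ∈ L' := by rw [hL'top]; trivial
      have hx' : IsSquare (algebraMap K ↥L' x) :=
        ⟨⟨y, hyL⟩, Subtype.ext (by push_cast [IntermediateField.coe_algebraMap_apply]; exact hy)⟩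
      obtain ⟨e, q, he, heq⟩ := IH K ↥L' h2 (fun i => α i.castSucc) (fun i => hα _) β' hβ' hgen' x hx'
      refine ⟨Fin.snoc e 0, q, ?_, ?_⟩
      · intro i
        refine Fin.lastCases ?_ ?_ i <;> simp [Fin.snoc_castSucc, Fin.snoc_last, he]
      · rw [Fin.prod_univ_castSucc]
        simp only [Fin.snoc_castSucc, Fin.snoc_last, pow_zero, mul_one]
        exact heq
    · -- γ ∉ L' : the hard case
      have halg : ∀ z ∈ Set.range β, IsAlgebraic K z := by
        rintro z ⟨i, rfl⟩
        refine ⟨Polynomial.X ^ 2 - Polynomial.C (α i), ?_, ?_⟩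
        · intro h
          have := congrArg (Polynomial.coeff · 2) h
          simp [Polynomial.coeff_X_pow] at this
        · simp [hβ i]
      have htop : Algebra.adjoin K (Set.range β) = ⊤ := by
        have h := IntermediateField.adjoin_toSubalgebra_of_isAlgebraic halg
        rw [hgen, IntermediateField.top_toSubalgebra] at h
        exact h.symm
      have hdecomp : ∀ z : L, ∃ a ∈ L', ∃ b ∈ L', z = a + b * γ := by
        intro z
        have hz : z ∈ Algebra.adjoin K (Set.range β) := by rw [htop]; trivial
        induction hz using Algebra.adjoin_induction with
        | mem w hw =>
          obtain ⟨i, rfl⟩ := hw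
          refine Fin.lastCases ?_ ?_ i
          · exact ⟨0, zero_mem _, 1, one_mem _, by simp [hγdef]⟩
          · intro j; exact ⟨β j.castSucc, hmemL' j, 0, zero_mem _, by simp⟩
        | algebraMap c =>
          exact ⟨algebraMap K L c, IntermediateField.algebraMap_mem _ _, 0, zero_mem _, by simp⟩
        | add u v hu hv ihu ihv =>
          obtain ⟨a, ha, b, hb, rfl⟩ := ihu
          obtain ⟨c, hcc, d, hd, rfl⟩ := ihv
          exact ⟨a + c, add_mem ha hcc, b + d, add_mem hb hd, by ring⟩
        | mul u v hu hv ihu ihv =>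
          obtain ⟨a, ha, b, hb, rfl⟩ := ihu
          obtain ⟨c, hcc, d, hd, rfl⟩ := ihv
          refine ⟨a * c + b * d * algebraMap K L (α (Fin.last r)), ?_, a * d + b * c, ?_, ?_⟩
          · exact add_mem (mul_mem ha hcc) (mul_mem (mul_mem hb hd) hc)
          · exact add_mem (mul_mem ha hd) (mul_mem hb hcc)
          · have h := hβ (Fin.last r)
            linear_combination (b * d) * h
      obtain ⟨y, hy⟩ := hx
      obtain ⟨a, ha, b, hb, rfl⟩ := hdecomp y
      have key : algebraMap K L x
          = a ^ 2 + b ^ 2 * algebraMap K L (α (Fin.last r)) + (2 * a * b) * γ := by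
        have h := hβ (Fin.last r)
        linear_combination hy + b ^ 2 * h
      have h2L : (2 : L) ≠ 0 := by
        have : (2 : L) = algebraMap K L 2 := by
          rw [map_ofNat]
        rw [this]
        simpa using h2
      have hab : a = 0 ∨ b = 0 := by
        by_contra hne
        push_neg at hne
        apply hγL
        have hne2 : 2 * a * b ≠ 0 := by
          simp [h2L, hne.1, hne.2]
        have h2ab : (2 * a * b) * γ ∈ L' := by
          have heq : (2 * a * b) * γ
              = algebraMap K L x - a ^ 2 - b ^ 2 * algebraMap K L (α (Fin.last r)) := by
            linear_combination -key
          rw [heq]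
          exact sub_mem (sub_mem (IntermediateField.algebraMap_mem _ _) (pow_mem ha 2))
            (mul_mem (pow_mem hb 2) hc)
        have h2mem : (2 : L) * a * b ∈ L' := by
          refine mul_mem (mul_mem ?_ ha) hb
          have : (2 : L) = algebraMap K L 2 := by rw [map_ofNat]
          rw [this]; exact IntermediateField.algebraMap_mem _ _
        have hγeq : γ = (2 * a * b)⁻¹ * ((2 * a * b) * γ) := by
          rw [← mul_assoc, inv_mul_cancel₀ hne2, one_mul]
        rw [hγeq]
        exact mul_mem (inv_mem h2mem) h2ab
      rcases hab with hA | hB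
      · -- a = 0 : x * α_last is a square in L'
        subst hA
        have hx' : IsSquare (algebraMap K ↥L' (x * α (Fin.last r))) := by
          refine ⟨⟨b * algebraMap K L (α (Fin.last r)), mul_mem hb hc⟩, Subtype.ext ?_⟩
          push_cast [IntermediateField.coe_algebraMap_apply]
          linear_combination algebraMap K L (α (Fin.last r)) * key
        obtain ⟨e, q, he, heq⟩ := IH K ↥L' h2 (fun i => α i.castSucc) (fun i => hα _) β' hβ'
          hgen' (x * α (Fin.last r)) hx'
        refine ⟨Fin.snoc e 1, q * (α (Fin.last r))⁻¹, ?_, ?_⟩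
        · intro i
          refine Fin.lastCases ?_ ?_ i <;> simp [Fin.snoc_castSucc, Fin.snoc_last, he]
        · rw [Fin.prod_univ_castSucc]
          simp only [Fin.snoc_castSucc, Fin.snoc_last, pow_one]
          have hαl := hα (Fin.last r)
          field_simp
          linear_combination heq
      · -- b = 0 : x is a square in L'
        subst hB
        have hx' : IsSquare (algebraMap K ↥L' x) := by
          refine ⟨⟨a, ha⟩, Subtype.ext ?_⟩
          push_cast [IntermediateField.coe_algebraMap_apply]
          linear_combination key
        obtain ⟨e, q, he, heq⟩ := IH K ↥L' h2 (fun i => α i.castSucc) (fun i => hα _) β' hβ'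
          hgen' x hx'
        refine ⟨Fin.snoc e 0, q, ?_, ?_⟩
        · intro i
          refine Fin.lastCases ?_ ?_ i <;> simp [Fin.snoc_castSucc, Fin.snoc_last, he]
        · rw [Fin.prod_univ_castSucc]
          simp only [Fin.snoc_castSucc, Fin.snoc_last, pow_zero, mul_one]
          exact heq

theorem stmt_13 (K L : Type*) [Field K] [Field L] [Algebra K L]
    (h2 : (2 : K) ≠ 0) (r : ℕ) (α : Fin r → K) (hα : ∀ i, α i ≠ 0)
    (β : Fin r → L) (hβ : ∀ i, β i ^ 2 = algebraMap K L (α i))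
    (hgen : IntermediateField.adjoin K (Set.range β) = ⊤)
    (x : K) (hx : IsSquare (algebraMap K L x)) :
    ∃ (e : Fin r → ℕ) (q : K), (∀ i, e i ≤ 1) ∧
      x = (∏ i, α i ^ e i) * q ^ 2 := by
  exact aux13 r K L h2 α hα β hβ hgen x hx
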